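/- Let k ≥ 1 and c ≥ 1 be integers and let p ∈ (0,1) with q = 1 - p. For y ∈ ℕ let ℓ(p, y) = c · log(1 - (1-p)^k) + k·y·log(1-p). Then ∑_{y=0}^∞ C(c+y-1, y) · (1-q^k)^c · q^{ky} · (∂³ℓ/∂p³)(p, y) = (ck/q³) · ( (k(k+1) q^k (1-q^k) + 2(k q^k + q^k - 1)²)/(1-q^k)³ − 2/(1-q^k) ), where ∂³ℓ/∂p³ denotes the third derivative of ℓ(·, y) with respect to p. -/

import Mathlib

open Real Set Filter

private lemma hdI (j : ℕ) (t : ℝ) :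
    HasDerivAt (fun t : ℝ => (1 - t) ^ (j+1)) (-((j+1) * (1 - t) ^ j)) t := by
  have := ((hasDerivAt_id t).const_sub 1).pow (j+1)
  refine this.congr_deriv ?_
  simp only [id_eq, Nat.add_sub_cancel]
  push_cast; ring

private lemma hd1 (j : ℕ) (C a t : ℝ) (ht : t ∈ Set.Ioo (0:ℝ) 1) :
    HasDerivAt (fun t : ℝ => C * Real.log (1 - (1 - t) ^ (j+1)) + a * Real.log (1 - t))
      (C * (j+1) * (1 - t) ^ (j+1) / ((1 - t) * (1 - (1 - t) ^ (j+1))) - a / (1 - t)) t := by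
  obtain ⟨ht0, ht1⟩ := ht
  have hq : (0:ℝ) < 1 - t := by linarith
  have hq0 : (1:ℝ) - t ≠ 0 := ne_of_gt hq
  have hs1 : (1 - t) ^ (j+1) < 1 := pow_lt_one₀ hq.le (by linarith) (Nat.succ_ne_zero j)
  have h1s : 1 - (1 - t) ^ (j+1) ≠ 0 := ne_of_gt (by linarith)
  have hL1 : HasDerivAt (fun t : ℝ => Real.log (1 - (1 - t) ^ (j+1)))
      (((j+1) * (1 - t) ^ j) / (1 - (1 - t) ^ (j+1))) t := by
    have := ((hdI j t).const_sub 1).log h1s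
    refine this.congr_deriv (by ring)
  have hL2 : HasDerivAt (fun t : ℝ => Real.log (1 - t)) ((-1) / (1 - t)) t :=
    (((hasDerivAt_id t).const_sub 1)).log hq0
  refine ((hL1.const_mul C).add (hL2.const_mul a)).congr_deriv ?_
  have hpow : (1 - t) ^ (j+1) = (1 - t) ^ j * (1 - t) := pow_succ _ _
  rw [hpow] at h1s ⊢
  set q := 1 - t with hqdef
  set S := q ^ j with hSdef
  field_simp
  ring

private lemma hd2 (j : ℕ) (C a t : ℝ) (ht : t ∈ Set.Ioo (0:ℝ) 1) :
    HasDerivAt (fun t : ℝ =>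
        C * (j+1) * (1 - t) ^ (j+1) / ((1 - t) * (1 - (1 - t) ^ (j+1))) - a / (1 - t))
      (-(C * (j+1) * (1 - t) ^ (j+1) * ((j : ℝ) + (1 - t) ^ (j+1)) /
          ((1 - t) ^ 2 * (1 - (1 - t) ^ (j+1)) ^ 2)) - a / (1 - t) ^ 2) t := by
  obtain ⟨ht0, ht1⟩ := ht
  have hq : (0:ℝ) < 1 - t := by linarith
  have hq0 : (1:ℝ) - t ≠ 0 := ne_of_gt hq
  have hs1 : (1 - t) ^ (j+1) < 1 := pow_lt_one₀ hq.le (by linarith) (Nat.succ_ne_zero j)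
  have h1s : 1 - (1 - t) ^ (j+1) ≠ 0 := ne_of_gt (by linarith)
  have hu : HasDerivAt (fun t : ℝ => C * (j+1) * (1 - t) ^ (j+1))
      (C * (j+1) * -((j+1) * (1 - t) ^ j)) t := (hdI j t).const_mul _
  have hv : HasDerivAt (fun t : ℝ => (1 - t) * (1 - (1 - t) ^ (j+1)))
      ((-1) * (1 - (1 - t) ^ (j+1)) + (1 - t) * -(-((j+1) * (1 - t) ^ j))) t := by
    have := (((hasDerivAt_id t).const_sub 1)).mul ((hdI j t).const_sub 1)
    exact this
  have hv0 : (1 - t) * (1 - (1 - t) ^ (j+1)) ≠ 0 := mul_ne_zero hq0 h1s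
  have ha : HasDerivAt (fun t : ℝ => a / (1 - t))
      ((0 * (1 - t) - a * (-1)) / (1 - t) ^ 2) t :=
    (hasDerivAt_const t a).div ((hasDerivAt_id t).const_sub 1) hq0
  refine ((hu.div hv hv0).sub ha).congr_deriv ?_
  have hpow : (1 - t) ^ (j+1) = (1 - t) ^ j * (1 - t) := pow_succ _ _
  rw [hpow] at h1s ⊢
  set q := 1 - t with hqdef
  set S := q ^ j with hSdef
  field_simp
  ring

private lemma hd3 (j : ℕ) (C a t : ℝ) (ht : t ∈ Set.Ioo (0:ℝ) 1) :
    HasDerivAt (fun t : ℝ =>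
        -(C * (j+1) * (1 - t) ^ (j+1) * ((j : ℝ) + (1 - t) ^ (j+1)) /
          ((1 - t) ^ 2 * (1 - (1 - t) ^ (j+1)) ^ 2)) - a / (1 - t) ^ 2)
      (C * (j+1) * (1 - t) ^ (j+1) *
          ((j : ℝ) * ((j : ℝ) - 1) + (j : ℝ) * ((j : ℝ) + 5) * (1 - t) ^ (j+1) +
            2 * ((1 - t) ^ (j+1)) ^ 2) /
          ((1 - t) ^ 3 * (1 - (1 - t) ^ (j+1)) ^ 3) - 2 * a / (1 - t) ^ 3) t := by
  obtain ⟨ht0, ht1⟩ := ht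
  have hq : (0:ℝ) < 1 - t := by linarith
  have hq0 : (1:ℝ) - t ≠ 0 := ne_of_gt hq
  have hs1 : (1 - t) ^ (j+1) < 1 := pow_lt_one₀ hq.le (by linarith) (Nat.succ_ne_zero j)
  have h1s : 1 - (1 - t) ^ (j+1) ≠ 0 := ne_of_gt (by linarith)
  have hN : HasDerivAt (fun t : ℝ => C * (j+1) * (1 - t) ^ (j+1) * ((j : ℝ) + (1 - t) ^ (j+1)))
      ((C * (j+1) * -((j+1) * (1 - t) ^ j)) * ((j : ℝ) + (1 - t) ^ (j+1)) +
        (C * (j+1) * (1 - t) ^ (j+1)) * -((j+1) * (1 - t) ^ j)) t :=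
    ((hdI j t).const_mul _).mul ((hdI j t).const_add _)
  have hD : HasDerivAt (fun t : ℝ => (1 - t) ^ 2 * (1 - (1 - t) ^ (j+1)) ^ 2)
      ((2 * (1 - t) ^ (2-1) * (-1)) * (1 - (1 - t) ^ (j+1)) ^ 2 +
        (1 - t) ^ 2 * (2 * (1 - (1 - t) ^ (j+1)) ^ (2-1) * -(-((j+1) * (1 - t) ^ j)))) t := by
    have := (((hasDerivAt_id t).const_sub 1).pow 2).mul (((hdI j t).const_sub 1).pow 2)
    refine this.congr_deriv ?_
    norm_num
  have hD0 : (1 - t) ^ 2 * (1 - (1 - t) ^ (j+1)) ^ 2 ≠ 0 :=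
    mul_ne_zero (pow_ne_zero 2 hq0) (pow_ne_zero 2 h1s)
  have ha : HasDerivAt (fun t : ℝ => a / (1 - t) ^ 2)
      ((0 * ((1 - t) ^ 2) - a * (2 * (1 - t) ^ (2-1) * (-1))) / ((1 - t) ^ 2) ^ 2) t :=
    (hasDerivAt_const t a).div (((hasDerivAt_id t).const_sub 1).pow 2) (pow_ne_zero 2 hq0)
  refine (((hN.div hD hD0).neg).sub ha).congr_deriv ?_
  have hpow : (1 - t) ^ (j+1) = (1 - t) ^ j * (1 - t) := pow_succ _ _
  norm_num
  rw [hpow] at h1s ⊢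
  set q := 1 - t with hqdef
  set S := q ^ j with hSdef
  field_simp
  ring

private lemma iter3 (j : ℕ) (C a : ℝ) (p : ℝ) (hp : p ∈ Set.Ioo (0:ℝ) 1) :
    iteratedDeriv 3 (fun t : ℝ => C * Real.log (1 - (1 - t) ^ (j+1)) + a * Real.log (1 - t)) p
      = C * (j+1) * (1 - p) ^ (j+1) *
          ((j : ℝ) * ((j : ℝ) - 1) + (j : ℝ) * ((j : ℝ) + 5) * (1 - p) ^ (j+1) +
            2 * ((1 - p) ^ (j+1)) ^ 2) /
          ((1 - p) ^ 3 * (1 - (1 - p) ^ (j+1)) ^ 3) - 2 * a / (1 - p) ^ 3 := by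
  have hopen : IsOpen (Set.Ioo (0:ℝ) 1) := isOpen_Ioo
  set f0 : ℝ → ℝ := fun t => C * Real.log (1 - (1 - t) ^ (j+1)) + a * Real.log (1 - t) with hf0
  have h1 : ∀ t ∈ Set.Ioo (0:ℝ) 1, deriv f0 t =
      C * (j+1) * (1 - t) ^ (j+1) / ((1 - t) * (1 - (1 - t) ^ (j+1))) - a / (1 - t) :=
    fun t ht => (hd1 j C a t ht).deriv
  have h2 : ∀ t ∈ Set.Ioo (0:ℝ) 1, deriv (deriv f0) t =
      -(C * (j+1) * (1 - t) ^ (j+1) * ((j : ℝ) + (1 - t) ^ (j+1)) /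
          ((1 - t) ^ 2 * (1 - (1 - t) ^ (j+1)) ^ 2)) - a / (1 - t) ^ 2 := by
    intro t ht
    have he : deriv f0 =ᶠ[nhds t]
        (fun t => C * (j+1) * (1 - t) ^ (j+1) / ((1 - t) * (1 - (1 - t) ^ (j+1))) - a / (1 - t)) :=
      Filter.eventuallyEq_of_mem (hopen.mem_nhds ht) h1
    rw [he.deriv_eq]
    exact (hd2 j C a t ht).deriv
  have h3 : deriv (deriv (deriv f0)) p =
      C * (j+1) * (1 - p) ^ (j+1) *
          ((j : ℝ) * ((j : ℝ) - 1) + (j : ℝ) * ((j : ℝ) + 5) * (1 - p) ^ (j+1) +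
            2 * ((1 - p) ^ (j+1)) ^ 2) /
          ((1 - p) ^ 3 * (1 - (1 - p) ^ (j+1)) ^ 3) - 2 * a / (1 - p) ^ 3 := by
    have he : deriv (deriv f0) =ᶠ[nhds p]
        (fun t => -(C * (j+1) * (1 - t) ^ (j+1) * ((j : ℝ) + (1 - t) ^ (j+1)) /
          ((1 - t) ^ 2 * (1 - (1 - t) ^ (j+1)) ^ 2)) - a / (1 - t) ^ 2) :=
      Filter.eventuallyEq_of_mem (hopen.mem_nhds hp) h2
    rw [he.deriv_eq]
    exact (hd3 j C a p hp).deriv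
  have hi : iteratedDeriv 3 f0 = deriv (deriv (deriv f0)) := by
    rw [show (3:ℕ) = 2+1 from rfl, iteratedDeriv_succ,
      show (2:ℕ) = 1+1 from rfl, iteratedDeriv_succ, iteratedDeriv_one]
  rw [hi, h3]

/-- Under model (b),
E[∂³ℓ/∂p³] = (ck/q³)·((k(k+1)q^k(1-q^k) + 2(kq^k+q^k-1)²)/(1-q^k)³ - 2/(1-q^k)),
where q = 1 - p and ℓ(p,y) = c·log(1-(1-p)^k) + k·y·log(1-p). -/
theorem stmt_13 (k c : ℕ) (hk : 1 ≤ k) (hc : 1 ≤ c) (p : ℝ)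
    (hp : p ∈ Set.Ioo (0 : ℝ) 1) :
    HasSum (fun y : ℕ =>
      ((c + y - 1).choose y : ℝ) * (1 - (1 - p) ^ k) ^ c * (1 - p) ^ (k * y) *
        iteratedDeriv 3
          (fun t : ℝ => c * Real.log (1 - (1 - t) ^ k) + k * y * Real.log (1 - t)) p)
      ((c : ℝ) * k / (1 - p) ^ 3 *
        (((k : ℝ) * (k + 1) * (1 - p) ^ k * (1 - (1 - p) ^ k) +
            2 * ((k : ℝ) * (1 - p) ^ k + (1 - p) ^ k - 1) ^ 2) / (1 - (1 - p) ^ k) ^ 3 -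
          2 / (1 - (1 - p) ^ k))) := by
  obtain ⟨j, rfl⟩ : ∃ j, k = j + 1 := ⟨k-1, by omega⟩
  obtain ⟨m, rfl⟩ : ∃ m, c = m + 1 := ⟨c-1, by omega⟩
  obtain ⟨hp0, hp1⟩ := hp
  have hq : (0:ℝ) < 1 - p := by linarith
  have hq0 : (1:ℝ) - p ≠ 0 := ne_of_gt hq
  have hs1 : (1 - p) ^ (j+1) < 1 := pow_lt_one₀ hq.le (by linarith) (Nat.succ_ne_zero j)
  have hs0 : (0:ℝ) < (1 - p) ^ (j+1) := pow_pos hq _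
  set s : ℝ := (1 - p) ^ (j+1) with hsdef
  have h1s0 : (0:ℝ) < 1 - s := by linarith
  have h1s : (1:ℝ) - s ≠ 0 := ne_of_gt h1s0
  have hnorm : ‖s‖ < 1 := by rw [Real.norm_eq_abs, abs_of_pos hs0]; exact hs1
  -- basic negative binomial sums
  have hw : HasSum (fun y : ℕ => ((y + m).choose m : ℝ) * s ^ y) (1 / (1 - s) ^ (m+1)) :=
    hasSum_choose_mul_geometric_of_norm_lt_one m hnorm
  have hg : HasSum (fun n : ℕ => ((n + (m+1)).choose (m+1) : ℝ) * s ^ n)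
      (1 / (1 - s) ^ (m+2)) := hasSum_choose_mul_geometric_of_norm_lt_one (m+1) hnorm
  have hf : HasSum (fun y : ℕ => ((y + m).choose (m+1) : ℝ) * s ^ y)
      (s * (1 / (1 - s) ^ (m+2))) := by
    have hg' := hg.mul_left s
    have he : (fun n : ℕ => (fun y : ℕ => ((y + m).choose (m+1) : ℝ) * s ^ y) (n + 1))
        = fun n : ℕ => s * (((n + (m+1)).choose (m+1) : ℝ) * s ^ n) := by
      funext n
      simp only
      rw [show n + 1 + m = n + (m+1) by ring]
      ring
    have h2 := (hasSum_nat_add_iff (f := fun y : ℕ => ((y + m).choose (m+1) : ℝ) * s ^ y) 1).mp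
      (by rw [he]; exact hg')
    simpa [Nat.choose_eq_zero_of_lt (Nat.lt_succ_self m)] using h2
  have hyw : HasSum (fun y : ℕ => (y : ℝ) * ((y + m).choose m : ℝ) * s ^ y)
      (((m:ℝ)+1) * (s * (1 / (1 - s) ^ (m+2)))) := by
    have h' := hf.mul_left ((m:ℝ)+1)
    have hid : (fun y : ℕ => ((m:ℝ)+1) * (((y + m).choose (m+1) : ℝ) * s ^ y))
        = fun y : ℕ => (y : ℝ) * ((y + m).choose m : ℝ) * s ^ y := by
      funext y
      have h := Nat.choose_succ_right_eq (y+m) m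
      rw [Nat.add_sub_cancel] at h
      have h2 := congrArg (Nat.cast : ℕ → ℝ) h
      push_cast at h2
      linear_combination s ^ y * h2
    rw [hid] at h'
    exact h'
  set A0 : ℝ := ((m:ℝ)+1) * ((j:ℝ)+1) * s *
      ((j : ℝ) * ((j : ℝ) - 1) + (j : ℝ) * ((j : ℝ) + 5) * s + 2 * s ^ 2) /
      ((1 - p) ^ 3 * (1 - s) ^ 3) with hA0
  set B : ℝ := -(2 * ((j:ℝ)+1) / (1 - p) ^ 3) with hB
  have hsum := ((hw.mul_left A0).add (hyw.mul_left B)).mul_left ((1 - s) ^ (m+1))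
  convert hsum using 1
  · rfl
  · funext y
    have hiter := iter3 j ((m:ℝ)+1) (((j:ℝ)+1) * (y:ℝ)) p ⟨hp0, hp1⟩
    have hC : ((m+1 : ℕ) : ℝ) = (m:ℝ)+1 := by push_cast; ring
    have hK : ((j+1 : ℕ) : ℝ) = (j:ℝ)+1 := by push_cast; ring
    rw [show (fun t : ℝ => ((m+1:ℕ):ℝ) * Real.log (1 - (1 - t) ^ (j+1)) +
        ((j+1:ℕ):ℝ) * (y:ℝ) * Real.log (1 - t))
      = (fun t : ℝ => ((m:ℝ)+1) * Real.log (1 - (1 - t) ^ (j+1)) +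
        (((j:ℝ)+1) * (y:ℝ)) * Real.log (1 - t)) by rw [hC, hK],
      hiter]
    have hch : ((m + 1 + y - 1).choose y : ℝ) = ((y + m).choose m : ℝ) := by
      norm_cast
      rw [show m + 1 + y - 1 = y + m by omega]
      rw [← Nat.choose_symm (Nat.le_add_right y m), show y + m - y = m by omega]
    rw [hch, show (j+1) * y = (j+1) * y from rfl]
    rw [← hsdef]
    rw [show (1 - p) ^ ((j+1) * y) = s ^ y by rw [hsdef, ← pow_mul]]
    rw [hA0, hB]
    ring
  · rw [hA0, hB]
    have hps : (1 - s) ^ (m+2) = (1 - s) ^ (m+1) * (1 - s) := pow_succ _ _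
    rw [hps]
    have hpne : ((1:ℝ) - s) ^ (m+1) ≠ 0 := pow_ne_zero _ h1s
    field_simp
    push_cast
    ring
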